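/- Let A be a finite dimensional algebra over an algebraically closed field K, let T be a functorially finite torsion class in mod(A), and let A →φ T₀ → T₁ → 0 be an exact sequence in which φ is a minimal left T-approximation of A. Then a module P ∈ T is split projective in T if and only if P belongs to add(T₀). -/

import Mathlib

open CategoryTheory

section Defs

variable (K : Type) [Field K] (A : Type) [Ring A] [Algebra K A]

/-- An `A`-module is in `mod(A)` if it is finite dimensional over `K`
(via restriction of scalars along `K → A`). -/
def modCls : Set (ModuleCat A) :=
  {M | @FiniteDimensional K (RestrictScalars K A M) _ _ (RestrictScalars.module K A M)}

variable {A}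

/-- A class of modules is replete (closed under isomorphisms). -/
def IsoClosed (C : Set (ModuleCat A)) : Prop :=
  ∀ ⦃M N : ModuleCat A⦄, (M ≅ N) → M ∈ C → N ∈ C

/-- Closed under quotients. -/
def QuotClosed (C : Set (ModuleCat A)) : Prop :=
  ∀ ⦃M N : ModuleCat A⦄ (f : M ⟶ N), Function.Surjective f → M ∈ C → N ∈ C

/-- Closed under extensions. -/
def ExtClosed (C : Set (ModuleCat A)) : Prop :=
  ∀ ⦃M E N : ModuleCat A⦄ (f : M ⟶ E) (g : E ⟶ N),
    Function.Injective f → Function.Surjective g → Function.Exact f g →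
    M ∈ C → N ∈ C → E ∈ C

/-- Closed under kernels. -/
def KerClosed (C : Set (ModuleCat A)) : Prop :=
  ∀ ⦃M N : ModuleCat A⦄ (f : M ⟶ N), M ∈ C → N ∈ C →
    ModuleCat.of A ↥(LinearMap.ker f.hom) ∈ C

/-- Closed under cokernels. -/
def CokerClosed (C : Set (ModuleCat A)) : Prop :=
  ∀ ⦃M N : ModuleCat A⦄ (f : M ⟶ N), M ∈ C → N ∈ C →
    ModuleCat.of A (N ⧸ LinearMap.range f.hom) ∈ C

variable (A)

/-- A wide subcategory of `mod(A)`: a replete class of finite dimensional modules closed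
under kernels, cokernels and extensions. -/
def IsWide (C : Set (ModuleCat A)) : Prop :=
  C ⊆ modCls K A ∧ IsoClosed C ∧ KerClosed C ∧ CokerClosed C ∧ ExtClosed C

/-- A torsion class in `mod(A)`: a replete class of finite dimensional modules closed
under quotients and extensions. -/
def IsTorsionClass (C : Set (ModuleCat A)) : Prop :=
  C ⊆ modCls K A ∧ IsoClosed C ∧ QuotClosed C ∧ ExtClosed C

variable {A}

/-- `gen C`: all quotients of finite direct sums of objects of `C`. -/
def gen (C : Set (ModuleCat A)) : Set (ModuleCat A) :=
  {X | ∃ (n : ℕ) (M : Fin n → ModuleCat A) (_ : ∀ i, M i ∈ C)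
      (f : ModuleCat.of A (∀ i, M i) ⟶ X), Function.Surjective f}

/-- Modules admitting a `C`-filtration `0 = F 0 ⊆ F 1 ⊆ ⋯ ⊆ F n = X` of length exactly `n`,
with all subquotients `F (i+1) / F i` in `C`. -/
def filtLen (C : Set (ModuleCat A)) (n : ℕ) : Set (ModuleCat A) :=
  {X | ∃ F : Fin (n + 1) → Submodule A X,
      Monotone F ∧ F 0 = ⊥ ∧ F (Fin.last n) = ⊤ ∧
      ∀ i : Fin n, ModuleCat.of A
        (↥(F i.succ) ⧸ Submodule.comap (F i.succ).subtype (F i.castSucc)) ∈ C}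

/-- `filt C`: all modules admitting a finite filtration with subquotients in `C`. -/
def filt (C : Set (ModuleCat A)) : Set (ModuleCat A) :=
  {X | ∃ n, X ∈ filtLen C n}

/-- `C^{⋆n}`: modules with a `C`-filtration of length at most `n`. -/
def filtAtMost (C : Set (ModuleCat A)) (n : ℕ) : Set (ModuleCat A) :=
  {X | ∃ m ≤ n, X ∈ filtLen C m}

/-- `α(T)`: the modules `X ∈ T` such that for every map `g : Y → X` with `Y ∈ T`,
the kernel of `g` is again in `T`. -/
def alpha (T : Set (ModuleCat A)) : Set (ModuleCat A) :=
  {X | X ∈ T ∧ ∀ ⦃Y : ModuleCat A⦄ (g : Y ⟶ X), Y ∈ T →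
      ModuleCat.of A ↥(LinearMap.ker g.hom) ∈ T}

/-- `g : X ⟶ C₁` is a left `C`-approximation of `X`. -/
def IsLeftApprox (C : Set (ModuleCat A)) {X C₁ : ModuleCat A} (g : X ⟶ C₁) : Prop :=
  C₁ ∈ C ∧ ∀ ⦃C' : ModuleCat A⦄ (h : X ⟶ C'), C' ∈ C → ∃ k : C₁ ⟶ C', g ≫ k = h

/-- `g : C₂ ⟶ X` is a right `C`-approximation of `X`. -/
def IsRightApprox (C : Set (ModuleCat A)) {C₂ X : ModuleCat A} (g : C₂ ⟶ X) : Prop :=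
  C₂ ∈ C ∧ ∀ ⦃C' : ModuleCat A⦄ (h : C' ⟶ X), C' ∈ C → ∃ k : C' ⟶ C₂, k ≫ g = h

/-- A left approximation is (left) minimal if every endomorphism compatible with it is an
isomorphism. -/
def IsMinimalLeftApprox (C : Set (ModuleCat A)) {X C₁ : ModuleCat A} (g : X ⟶ C₁) : Prop :=
  IsLeftApprox C g ∧ ∀ h : C₁ ⟶ C₁, g ≫ h = g → IsIso h

variable (A)

/-- A class `C` is functorially finite in `mod(A)` if every finite dimensional module has
both a left and a right `C`-approximation. -/
def FunctFinite (C : Set (ModuleCat A)) : Prop :=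
  ∀ X ∈ modCls K A, (∃ (C₁ : ModuleCat A) (g : X ⟶ C₁), IsLeftApprox C g) ∧
    (∃ (C₂ : ModuleCat A) (g : C₂ ⟶ X), IsRightApprox C g)

variable {A}

/-- `add M`: direct summands of finite direct sums of copies of `M`. -/
def addOf (M : ModuleCat A) : Set (ModuleCat A) :=
  {X | ∃ (n : ℕ) (i : X ⟶ ModuleCat.of A (Fin n → M)) (r : ModuleCat.of A (Fin n → M) ⟶ X),
      i ≫ r = 𝟙 X}

/-- `gen M`: quotients of finite direct sums of copies of `M`. -/
def genOf (M : ModuleCat A) : Set (ModuleCat A) :=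
  {X | ∃ (n : ℕ) (f : ModuleCat.of A (Fin n → M) ⟶ X), Function.Surjective f}

/-- `P` is split projective in `C`: `P ∈ C` and every epimorphism onto `P` from an
object of `C` splits. -/
def SplitProjIn (C : Set (ModuleCat A)) (P : ModuleCat A) : Prop :=
  P ∈ C ∧ ∀ ⦃M : ModuleCat A⦄ (f : M ⟶ P), M ∈ C → Function.Surjective f →
    ∃ s : P ⟶ M, s ≫ f = 𝟙 P

end Defs

section Aux

variable {A : Type} [Ring A]

private lemma tcSubsingletonMem {T : Set (ModuleCat A)} (hQ : QuotClosed T)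
    {X : ModuleCat A} (hX : X ∈ T) (Z : ModuleCat A) (hZ : Subsingleton Z) : Z ∈ T :=
  hQ (0 : X ⟶ Z) (fun _ => ⟨0, Subsingleton.elim _ _⟩) hX

private lemma tcPowMem {T : Set (ModuleCat A)} (hQ : QuotClosed T) (hE : ExtClosed T)
    {T₀ : ModuleCat A} (h0 : T₀ ∈ T) : ∀ n, ModuleCat.of A (Fin n → T₀) ∈ T
  | 0 => tcSubsingletonMem hQ h0 _ ⟨fun a b => funext fun i => i.elim0⟩
  | (n+1) => by
    have hn := tcPowMem hQ hE h0 n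
    set f : T₀ ⟶ ModuleCat.of A (Fin (n+1) → T₀) :=
      ModuleCat.ofHom (LinearMap.single A (fun _ : Fin (n+1) => T₀) 0) with hfdef
    set g : ModuleCat.of A (Fin (n+1) → T₀) ⟶ ModuleCat.of A (Fin n → T₀) :=
      ModuleCat.ofHom (LinearMap.funLeft A T₀ Fin.succ) with hgdef
    have hfpi : ∀ x : T₀, f x = (Pi.single (0 : Fin (n+1)) x : Fin (n+1) → T₀) := fun x => rfl
    have hfapp0 : ∀ x : T₀, f x 0 = x := fun x => by
      rw [hfpi]; simp
    have hfapps : ∀ (x : T₀) (j : Fin n), f x j.succ = 0 := fun x j => by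
      rw [hfpi]; exact Pi.single_eq_of_ne (Fin.succ_ne_zero j) x
      -- fallback
    have hgapp : ∀ (y : Fin (n+1) → T₀) (j : Fin n), g y j = y j.succ := fun y j => rfl
    refine hE f g ?_ ?_ ?_ h0 hn
    · intro x y h
      rw [← hfapp0 x, ← hfapp0 y]
      exact congrFun h 0
    · intro y
      exact ⟨Fin.cons 0 y, funext fun j => by rw [hgapp, Fin.cons_succ]⟩
    · intro y
      constructor
      · intro h
        refine ⟨y 0, funext fun j => ?_⟩
        refine Fin.cases ?_ (fun i => ?_) j
        · exact hfapp0 (y 0)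
        · rw [hfapps]
          exact (congrFun h i).symm
      · rintro ⟨x, rfl⟩
        funext j
        rw [hgapp, hfapps]
        rfl

private lemma tcProdMem {T : Set (ModuleCat A)} (hE : ExtClosed T)
    {M N : ModuleCat A} (hM : M ∈ T) (hN : N ∈ T) : ModuleCat.of A (↥M × ↥N) ∈ T := by
  refine hE (show M ⟶ ModuleCat.of A (↥M × ↥N) from ModuleCat.ofHom (LinearMap.inl A ↥M ↥N))
    (show ModuleCat.of A (↥M × ↥N) ⟶ N from ModuleCat.ofHom (LinearMap.snd A ↥M ↥N))
    LinearMap.inl_injective (fun n => ⟨(0, n), rfl⟩) ?_ hM hN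
  intro x
  constructor
  · intro hx
    exact ⟨x.1, Prod.ext rfl (show (0 : ↥N) = x.2 from (hx : x.2 = 0).symm)⟩
  · rintro ⟨m, rfl⟩
    rfl

private lemma tcSplitT0 {T : Set (ModuleCat A)} {T₀ : ModuleCat A}
    {φ : ModuleCat.of A A ⟶ T₀} (hφ : IsMinimalLeftApprox T φ)
    {M : ModuleCat A} (hM : M ∈ T) (f : M ⟶ T₀) (hf : Function.Surjective f) :
    ∃ s : T₀ ⟶ M, s ≫ f = 𝟙 T₀ := by
  obtain ⟨m, hm⟩ := hf (φ (1 : A))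
  set g : ModuleCat.of A A ⟶ M := ModuleCat.ofHom (LinearMap.toSpanSingleton A M m) with hgdef
  have hgf : g ≫ f = φ := by
    refine ModuleCat.hom_ext (LinearMap.ext fun a => ?_)
    show f (a • m) = φ a
    rw [map_smul, hm, ← map_smul, smul_eq_mul]
    congr 1
    exact mul_one (show A from a)
  obtain ⟨k, hk⟩ := hφ.1.2 g hM
  have h2 : φ ≫ (k ≫ f) = φ := by rw [← Category.assoc, hk, hgf]
  have : IsIso (k ≫ f) := hφ.2 _ h2
  exact ⟨inv (k ≫ f) ≫ k, by rw [Category.assoc, IsIso.inv_hom_id]⟩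

private lemma tcSplitPow {T : Set (ModuleCat A)} {T₀ : ModuleCat A}
    {φ : ModuleCat.of A A ⟶ T₀} (hφ : IsMinimalLeftApprox T φ) :
    ∀ (n : ℕ) {M : ModuleCat A}, M ∈ T →
      ∀ (f : M ⟶ ModuleCat.of A (Fin n → T₀)), Function.Surjective f →
      ∃ s : ModuleCat.of A (Fin n → T₀) ⟶ M, s ≫ f = 𝟙 _
  | 0, M, hM, f, hf => ⟨0, ModuleCat.hom_ext (LinearMap.ext fun y => funext fun (i : Fin 0) => i.elim0)⟩
  | (n+1), M, hM, f, hf => by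
    set π : (Fin (n+1) → T₀) →ₗ[A] T₀ := LinearMap.proj (Fin.last n) with hπdef
    set ini : (Fin (n+1) → T₀) →ₗ[A] (Fin n → T₀) :=
      LinearMap.funLeft A T₀ Fin.castSucc with hinidef
    have hπf : Function.Surjective (π.comp f.hom) := by
      intro x
      obtain ⟨m, hm⟩ := hf (Fin.snoc (0 : Fin n → T₀) x)
      refine ⟨m, ?_⟩
      show (f m) (Fin.last n) = x
      rw [hm]
      exact Fin.snoc_last ..
    obtain ⟨s, hs⟩ := tcSplitT0 hφ hM
      (show M ⟶ T₀ from ModuleCat.ofHom (π.comp f.hom)) hπf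
    have hs' : ∀ x : T₀, π (f (s x)) = x := fun x => LinearMap.congr_fun (congrArg ModuleCat.Hom.hom hs) x
    set β : T₀ →ₗ[A] (Fin n → T₀) :=
      ini.comp (f.hom.comp s.hom) with hβdef
    set F : M ⟶ ModuleCat.of A (Fin n → T₀) :=
      ModuleCat.ofHom (ini.comp f.hom
        - β.comp (π.comp f.hom) : M →ₗ[A] (Fin n → T₀)) with hFdef
    have hFval : ∀ m : M, F m = ini (f m) - β (π (f m)) := fun m => rfl
    have hFsurj : Function.Surjective F := by
      intro t
      obtain ⟨m, hm⟩ := hf (Fin.snoc t (0 : T₀))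
      refine ⟨m, ?_⟩
      have h1 : π (f m) = 0 := by
        show (f m) (Fin.last n) = 0
        rw [hm]; exact Fin.snoc_last ..
      have h2 : ini (f m) = t := funext fun i => by
        show (f m) (Fin.castSucc i) = t i
        rw [hm]; exact Fin.snoc_castSucc ..
      rw [hFval, h1, h2, map_zero, sub_zero]
    obtain ⟨s₂, hs₂⟩ := tcSplitPow hφ n hM F hFsurj
    have hs₂app : ∀ t, ini (f (s₂ t)) - β (π (f (s₂ t))) = t := fun t =>
      LinearMap.congr_fun (congrArg ModuleCat.Hom.hom hs₂) t
    set s₂' : (Fin n → T₀) →ₗ[A] M :=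
      s₂.hom
        - s.hom.comp
            ((π.comp f.hom).comp s₂.hom)
      with hs₂'def
    have hs₂'app : ∀ t, s₂' t = s₂ t - s (π (f (s₂ t))) := fun t => rfl
    have hβapp : ∀ x, ini (f (s x)) = β x := fun x => rfl
    have key1 : ∀ t, π (f (s₂' t)) = 0 := fun t => by
      rw [hs₂'app t, map_sub, map_sub, hs', sub_self]
    have key2 : ∀ t, ini (f (s₂' t)) = t := fun t => by
      rw [hs₂'app t, map_sub, map_sub, hβapp]
      exact hs₂app t
    set σ : (Fin (n+1) → T₀) →ₗ[A] M :=
      s₂'.comp (ini - β.comp π) + s.hom.comp π with hσdef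
    have hσapp : ∀ y, σ y = s₂' (ini y - β (π y)) + s (π y) := fun y => rfl
    have ext2 : ∀ a b : (Fin (n+1) → T₀), ini a = ini b → π a = π b → a = b := by
      intro a b h1 h2
      funext j
      refine Fin.lastCases ?_ (fun i => ?_) j
      · exact h2
      · exact congrFun h1 i
    refine ⟨ModuleCat.ofHom σ, ModuleCat.hom_ext (LinearMap.ext fun y => ?_)⟩
    show f (σ y) = y
    refine ext2 _ _ ?_ ?_
    · rw [hσapp, map_add, map_add, key2, hβapp, sub_add_cancel]
    · rw [hσapp, map_add, map_add, key1, hs', zero_add]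

end Aux

theorem split_projective_iff_add_T0 (K : Type) [Field K] [IsAlgClosed K] (A : Type) [Ring A] [Algebra K A]
    [FiniteDimensional K A]
    (T : Set (ModuleCat A))
    (hT : IsTorsionClass K A T) (hff : FunctFinite K A T)
    (T₀ T₁ : ModuleCat A) (φ : ModuleCat.of A A ⟶ T₀) (ψ : T₀ ⟶ T₁)
    (hφ : IsMinimalLeftApprox T φ) (hψ : Function.Surjective ψ)
    (hexact : Function.Exact φ ψ)
    (P : ModuleCat A) (hP : P ∈ T) :
    SplitProjIn T P ↔ P ∈ addOf T₀ := by
  classical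
  have hT₀ : T₀ ∈ T := hφ.1.1
  constructor
  · intro hsp
    letI : @Module K (RestrictScalars K A P) _ AddCommGroup.toAddCommMonoid :=
      RestrictScalars.module K A P
    have hfd : FiniteDimensional K (RestrictScalars K A P) := hT.1 hP
    obtain ⟨S, hS⟩ := Module.finite_def.mp hfd
    let c : RestrictScalars K A P → P := fun x => x
    have key : ∀ x : RestrictScalars K A P,
        x ∈ Submodule.span K (↑S : Set (RestrictScalars K A P)) →
        c x ∈ Submodule.span A (c '' ↑S) := by
      intro x hx
      refine Submodule.span_induction ?_ ?_ ?_ ?_ hx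
      · intro y hy; exact Submodule.subset_span ⟨y, hy, rfl⟩
      · exact Submodule.zero_mem _
      · intro y z _ _ hy hz; exact Submodule.add_mem _ hy hz
      · intro a y _ hy
        exact Submodule.smul_mem _ (algebraMap K A a) hy
    have hAspan : (⊤ : Submodule A P).FG := by
      refine ⟨S.image c, ?_⟩
      rw [eq_top_iff]
      rintro x -
      rw [Finset.coe_image]
      exact key ((RestrictScalars.addEquiv K A P).symm x) (hS.ge Submodule.mem_top)
    obtain ⟨n, b, hb⟩ := Submodule.fg_iff_exists_fin_generating_family.mp hAspan
    choose k hk using fun j : Fin n =>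
      hφ.1.2 (show ModuleCat.of A A ⟶ P from ModuleCat.ofHom (LinearMap.toSpanSingleton A P (b j))) hP
    set q : (Fin n → T₀) →ₗ[A] P :=
      ∑ j, (k j).hom.comp (LinearMap.proj j) with hqdef
    have hkφ : ∀ j, k j (φ (1 : A)) = b j := fun j => by
      have h1 := LinearMap.congr_fun (congrArg ModuleCat.Hom.hom (hk j)) (show ModuleCat.of A A from (1 : A))
      have h2 : k j (φ (1 : A)) = (1 : A) • b j := h1
      rwa [one_smul] at h2
    have hbq : ∀ j, q (Pi.single j (φ (1 : A))) = b j := fun j => by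
      rw [hqdef, LinearMap.sum_apply]
      rw [Finset.sum_eq_single j]
      · rw [LinearMap.comp_apply, LinearMap.proj_apply, Pi.single_eq_same]
        exact hkφ j
      · intro c' _ hc
        rw [LinearMap.comp_apply, LinearMap.proj_apply, Pi.single_eq_of_ne hc, map_zero]
      · intro h
        exact absurd (Finset.mem_univ j) h
    have hqsurj : Function.Surjective q := by
      rw [← LinearMap.range_eq_top, ← top_le_iff, ← hb, Submodule.span_le]
      rintro _ ⟨j, rfl⟩
      exact ⟨Pi.single j (φ (1 : A)), hbq j⟩
    obtain ⟨sp, hsp2⟩ := hsp.2 (show ModuleCat.of A (Fin n → T₀) ⟶ P from ModuleCat.ofHom q)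
      (tcPowMem hT.2.2.1 hT.2.2.2 hT₀ n) hqsurj
    exact ⟨n, sp, ModuleCat.ofHom q, hsp2⟩
  · rintro ⟨n, i, r, hir⟩
    refine ⟨hP, ?_⟩
    intro M f hM hf
    obtain ⟨i', r', hri⟩ : ∃ (i' : P →ₗ[A] (Fin n → T₀)) (r' : (Fin n → T₀) →ₗ[A] P),
        ∀ p : P, r' (i' p) = p :=
      ⟨i.hom, r.hom, fun p => LinearMap.congr_fun (congrArg ModuleCat.Hom.hom hir) p⟩
    have hVmem : ModuleCat.of A (M × (Fin n → T₀)) ∈ T :=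
      tcProdMem hT.2.2.2 hM (tcPowMem hT.2.2.1 hT.2.2.2 hT₀ n)
    set g : (M × (Fin n → T₀)) →ₗ[A] (Fin n → T₀) :=
      (i'.comp (LinearMap.comp f.hom (LinearMap.fst A M (Fin n → T₀)))
        + LinearMap.snd A M (Fin n → T₀)
        - i'.comp (r'.comp (LinearMap.snd A M (Fin n → T₀)))) with hgdef
    have hgapp : ∀ v : M × (Fin n → T₀), g v = i' (f v.1) + v.2 - i' (r' v.2) :=
      fun v => rfl
    have hgsurj : Function.Surjective g := by
      intro t
      obtain ⟨m, hm⟩ := hf (r' t)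
      refine ⟨(m, t - i' (r' t)), ?_⟩
      rw [hgapp]
      dsimp only
      have hr0 : r' (t - i' (r' t)) = 0 := by rw [map_sub, hri, sub_self]
      rw [hm, hr0, map_zero, sub_zero]
      abel
    obtain ⟨s, hs⟩ := tcSplitPow hφ n hVmem
      (show ModuleCat.of A (M × (Fin n → T₀)) ⟶ ModuleCat.of A (Fin n → T₀) from ModuleCat.ofHom g) hgsurj
    have hsg : ∀ t : Fin n → T₀, g (s t) = t := fun t => LinearMap.congr_fun (congrArg ModuleCat.Hom.hom hs) t
    refine ⟨ModuleCat.ofHom (LinearMap.comp (LinearMap.fst A M (Fin n → T₀))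
      (LinearMap.comp s.hom i')), ?_⟩
    refine ModuleCat.hom_ext (LinearMap.ext fun p => ?_)
    show f ((s (i' p)).1) = p
    have h1 := hsg (i' p)
    rw [hgapp] at h1
    have h2 := congrArg r' h1
    rw [map_sub, map_add, hri, hri, hri] at h2
    rwa [add_sub_cancel_right] at h2
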